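/- arXiv:1611.08105 — 4 statements merged into one kernel-verified Lean document; each statement's English description precedes it below -/
import Mathlib

section
/- Let X be a finite-dimensional Hilbert space, t ∈ [0,T], E(t,·) ∈ C¹(X), and let θ : (a,b) → X be locally Lipschitz with θ(s) not a critical point of E(t,·) for all s ∈ (a,b), and suppose there exists a measurable λ : (a,b) → (0,∞) with λ(s)θ'(s) + DE(t,θ(s)) = 0 for a.e. s, where λ(s) ≥ λ_ρ > 0 on each compact subinterval [a+ρ, b−ρ]. Then the time change σ(s) := ∫_{s̄}^s 1/λ(r) dr (for fixed s̄ ∈ (a,b)) is locally Lipschitz, strictly increasing, and its inverse 𝔰 satisfies 𝔰'(σ) = λ(𝔰(σ)) a.e.; moreover the reparameterized curve θ̃(σ) := θ(𝔰(σ)) is locally absolutely continuous and solves the gradient flow equation θ̃'(σ) + DE(t, θ̃(σ)) = 0 for a.e. σ in the (possibly unbounded) interval (σ(a), σ(b)). -/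
open MeasureTheory Filter Set intervalIntegral

/-- Reparameterization of a curve satisfying `λ(s) θ'(s) + DE(θ(s)) = 0` to a
solution of the gradient flow: the time change `σ(s) = ∫_{s̄}^s dr/λ(r)` is
locally Lipschitz and strictly increasing on `(a,b)`, its inverse `𝔰` satisfies
`𝔰'(σ) = λ(𝔰(σ))` a.e., and `θ̃ = θ ∘ 𝔰` is locally absolutely continuous and
solves `θ̃' + DE(θ̃) = 0` a.e. on `(σ(a⁺), σ(b⁻)) = σ''(a,b)`. -/
theorem stmt8
    {X : Type*} [NormedAddCommGroup X] [InnerProductSpace ℝ X] [FiniteDimensional ℝ X]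
    (E : X → ℝ) (hE : ContDiff ℝ 1 E)
    (a b : ℝ) (hab : a < b) (θ θ' : ℝ → X)
    (hLip : ∀ c d : ℝ, a < c → c ≤ d → d < b →
      ∃ K : NNReal, LipschitzOnWith K θ (Set.Icc c d))
    (hθderiv : ∀ᵐ s ∂(volume.restrict (Set.Ioo a b)), HasDerivAt θ (θ' s) s)
    (hnc : ∀ s ∈ Set.Ioo a b, gradient E (θ s) ≠ 0)
    (lam : ℝ → ℝ) (hlammeas : Measurable lam)
    (hlampos : ∀ s ∈ Set.Ioo a b, 0 < lam s)
    (hlamlb : ∀ ρ > 0, a + ρ ≤ b - ρ →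
      ∃ lamρ > 0, ∀ s ∈ Set.Icc (a + ρ) (b - ρ), lamρ ≤ lam s)
    (hflow : ∀ᵐ s ∂(volume.restrict (Set.Ioo a b)),
      lam s • θ' s + gradient E (θ s) = 0)
    (sbar : ℝ) (hsbar : sbar ∈ Set.Ioo a b)
    (σ : ℝ → ℝ) (hσ : ∀ s ∈ Set.Ioo a b, σ s = ∫ r in sbar..s, 1 / lam r) :
    (∀ c d : ℝ, a < c → c ≤ d → d < b → ∃ K : NNReal,
      LipschitzOnWith K σ (Set.Icc c d)) ∧
    StrictMonoOn σ (Set.Ioo a b) ∧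
    ∃ 𝔰 : ℝ → ℝ,
      (∀ s ∈ Set.Ioo a b, 𝔰 (σ s) = s) ∧
      Set.MapsTo 𝔰 (σ '' Set.Ioo a b) (Set.Ioo a b) ∧
      (∀ᵐ τ ∂(volume.restrict (σ '' Set.Ioo a b)),
        HasDerivAt 𝔰 (lam (𝔰 τ)) τ) ∧
      (∀ᵐ τ ∂(volume.restrict (σ '' Set.Ioo a b)),
        HasDerivAt (fun τ' => θ (𝔰 τ')) (-gradient E (θ (𝔰 τ))) τ) := by
  classical
  -- lower bound for lam on compact subintervals
  have hlb : ∀ c d : ℝ, a < c → d < b → c ≤ d →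
      ∃ m > 0, ∀ s ∈ Set.Icc c d, m ≤ lam s := by
    intro c d hc hd hcd
    have hρ : 0 < min (c - a) (b - d) := lt_min (by linarith) (by linarith)
    obtain ⟨m, hm, hmle⟩ := hlamlb (min (c - a) (b - d)) hρ
      (by
        have h1 : a + min (c - a) (b - d) ≤ c := by
          have := min_le_left (c - a) (b - d); linarith
        have h2 : d ≤ b - min (c - a) (b - d) := by
          have := min_le_right (c - a) (b - d); linarith
        linarith)
    refine ⟨m, hm, fun s hs => hmle s ⟨?_, ?_⟩⟩
    · have := min_le_left (c - a) (b - d); have := hs.1; linarith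
    · have := min_le_right (c - a) (b - d); have := hs.2; linarith
  have hmeas1 : Measurable (fun r : ℝ => 1 / lam r) := by
    exact measurable_const.div hlammeas
  -- interval integrability of 1/lam between points of (a,b)
  have hInt : ∀ u v : ℝ, u ∈ Set.Ioo a b → v ∈ Set.Ioo a b →
      IntervalIntegrable (fun r : ℝ => 1 / lam r) volume u v := by
    intro u v hu hv
    rw [intervalIntegrable_iff']
    obtain ⟨m, hm, hmle⟩ := hlb (min u v) (max u v)
      (lt_min hu.1 hv.1) (max_lt hu.2 hv.2) min_le_max
    refine Measure.integrableOn_of_bounded (M := 1 / m) ?_ hmeas1.aestronglyMeasurable ?_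
    · rw [Set.uIcc]; exact measure_Icc_lt_top.ne
    · refine (ae_restrict_iff' measurableSet_uIcc).2 (ae_of_all _ fun x hx => ?_)
      have hx' : x ∈ Set.Icc (min u v) (max u v) := by rwa [Set.uIcc] at hx
      have h1 := hmle x hx'
      have hpos : 0 < lam x := lt_of_lt_of_le hm h1
      rw [Real.norm_eq_abs, abs_of_pos (by positivity)]
      exact one_div_le_one_div_of_le hm h1
  -- difference formula for σ
  have hσdiff : ∀ u v : ℝ, u ∈ Set.Ioo a b → v ∈ Set.Ioo a b →
      σ v - σ u = ∫ r in u..v, 1 / lam r := by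
    intro u v hu hv
    rw [hσ u hu, hσ v hv,
      ← intervalIntegral.integral_add_adjacent_intervals (hInt sbar u hsbar hu) (hInt u v hu hv)]
    ring
  -- Part 1: local Lipschitz property of σ
  have lip : ∀ c d : ℝ, a < c → c ≤ d → d < b →
      ∃ K : NNReal, LipschitzOnWith K σ (Set.Icc c d) := by
    intro c d hc hcd hd
    obtain ⟨m, hm, hmle⟩ := hlb c d hc hd hcd
    refine ⟨Real.toNNReal (1 / m), LipschitzOnWith.of_dist_le_mul fun x hx y hy => ?_⟩
    have hsub : Set.Icc c d ⊆ Set.Ioo a b :=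
      fun z hz => ⟨lt_of_lt_of_le hc hz.1, lt_of_le_of_lt hz.2 hd⟩
    have hx' := hsub hx; have hy' := hsub hy
    have key : ‖∫ r in y..x, 1 / lam r‖ ≤ (1 / m) * |x - y| := by
      apply intervalIntegral.norm_integral_le_of_norm_le_const
      intro z hz
      have hz' : z ∈ Set.Icc c d := by
        have : z ∈ Set.uIcc y x := Set.uIoc_subset_uIcc hz
        exact Set.ordConnected_Icc.uIcc_subset hy hx this
      have h1 := hmle z hz'
      have hpos : 0 < lam z := lt_of_lt_of_le hm h1
      rw [Real.norm_eq_abs, abs_of_pos (by positivity)]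
      exact one_div_le_one_div_of_le hm h1
    rw [Real.dist_eq, Real.dist_eq, hσdiff y x hy' hx',
      Real.coe_toNNReal _ (by positivity : (0:ℝ) ≤ 1 / m)]
    simpa [Real.norm_eq_abs] using key
  -- Part 2: strict monotonicity
  have smono : StrictMonoOn σ (Set.Ioo a b) := by
    intro u hu v hv huv
    have hd := hσdiff u v hu hv
    have hpos : 0 < ∫ r in u..v, 1 / lam r := by
      refine intervalIntegral_pos_of_pos_on (hInt u v hu hv) (fun x hx => ?_) huv
      exact one_div_pos.2 (hlampos x ⟨hu.1.trans hx.1, hx.2.trans hv.2⟩)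
    linarith
  -- exhausting sequence
  have hba : (0:ℝ) < b - a := by linarith
  set cs : ℕ → ℝ := fun n => a + (b - a) / (n + 2) with hcsdef
  set ds : ℕ → ℝ := fun n => b - (b - a) / (n + 2) with hdsdef
  have hposn : ∀ n : ℕ, 0 < (b - a) / ((n:ℝ) + 2) := fun n => by positivity
  have hcsa : ∀ n, a < cs n := fun n => by have := hposn n; simp only [hcsdef]; linarith
  have hdsb : ∀ n, ds n < b := fun n => by have := hposn n; simp only [hdsdef]; linarith
  have hcover : ∀ s ∈ Set.Ioo a b, ∃ n : ℕ, cs n < s ∧ s < ds n := by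
    intro s hs
    have hepos : 0 < min (s - a) (b - s) := lt_min (by linarith [hs.1]) (by linarith [hs.2])
    obtain ⟨n, hn⟩ := exists_nat_gt ((b - a) / min (s - a) (b - s))
    have hlt : (b - a) / ((n:ℝ) + 2) < min (s - a) (b - s) := by
      rw [div_lt_iff₀ (by positivity)]
      have h1 : (b - a) < (n:ℝ) * min (s - a) (b - s) := by
        have := (div_lt_iff₀ hepos).1 hn; linarith
      nlinarith
    refine ⟨n, ?_, ?_⟩
    · have h2 : min (s - a) (b - s) ≤ s - a := min_le_left _ _
      simp only [hcsdef]; linarith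
    · have h2 : min (s - a) (b - s) ≤ b - s := min_le_right _ _
      simp only [hdsdef]; linarith
  -- a.e. derivative of σ on compact subintervals
  have hcompact : ∀ c d : ℝ, a < c → d < b →
      ∀ᵐ s, s ∈ Set.Ioo c d → HasDerivAt σ (1 / lam s) s := by
    intro c d hc hd
    rcases le_or_gt d c with hdc | hcd
    · filter_upwards with s hs
      exact absurd (hs.1.trans hs.2) (not_lt.2 hdc)
    set c' : ℝ := (a + c) / 2 with hc'def
    set d' : ℝ := (d + b) / 2 with hd'def
    have hc'1 : a < c' := by simp only [hc'def]; linarith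
    have hc'2 : c' < c := by simp only [hc'def]; linarith
    have hd'1 : d < d' := by simp only [hd'def]; linarith
    have hd'2 : d' < b := by simp only [hd'def]; linarith
    have hc'Ioo : c' ∈ Set.Ioo a b := ⟨hc'1, by linarith⟩
    have hd'Ioo : d' ∈ Set.Ioo a b := ⟨by linarith, hd'2⟩
    have hsubIcc : Set.Icc c' d' ⊆ Set.Ioo a b :=
      fun z hz => ⟨lt_of_lt_of_le hc'1 hz.1, lt_of_le_of_lt hz.2 hd'2⟩
    set g : ℝ → ℝ := (Set.Icc c' d').indicator (fun r => 1 / lam r) with hgdef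
    have hgmeas : Measurable g := hmeas1.indicator measurableSet_Icc
    have hgnonneg : ∀ r, 0 ≤ g r := by
      intro r
      refine Set.indicator_nonneg (fun z hz => ?_) r
      exact le_of_lt (one_div_pos.2 (hlampos z (hsubIcc hz)))
    have hgint : Integrable g := by
      rw [hgdef, integrable_indicator_iff measurableSet_Icc]
      have := (intervalIntegrable_iff' (μ := volume)).1 (hInt c' d' hc'Ioo hd'Ioo)
      rwa [Set.uIcc_of_le (by linarith)] at this
    have hgIInt : ∀ u v : ℝ, IntervalIntegrable g volume u v :=
      fun u v => hgint.intervalIntegrable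
    set F : ℝ → ℝ := fun x => ∫ r in c'..x, g r with hFdef
    have hFcont : Continuous F := intervalIntegral.continuous_primitive hgIInt c'
    have hFadd : ∀ x y : ℝ, F y - F x = ∫ r in x..y, g r := by
      intro x y
      rw [hFdef]
      simp only
      rw [← intervalIntegral.integral_add_adjacent_intervals (hgIInt c' x) (hgIInt x y)]
      ring
    have hFmono : Monotone F := by
      intro x y hxy
      have h0 : 0 ≤ ∫ r in x..y, g r :=
        intervalIntegral.integral_nonneg hxy (fun u _ => hgnonneg u)
      have := hFadd x y
      linarith
    set S : StieltjesFunction ℝ := ⟨F, hFmono, fun x => hFcont.continuousWithinAt⟩ with hSdef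
    have hSmeas : S.measure = volume.withDensity (fun r => ENNReal.ofReal (g r)) := by
      refine Measure.ext_of_Ioc _ _ (fun u v huv => ?_)
      rw [S.measure_Ioc, withDensity_apply _ measurableSet_Ioc]
      have h1 : S v - S u = ∫ r in Set.Ioc u v, g r := by
        show F v - F u = _
        rw [hFadd u v, intervalIntegral.integral_of_le huv.le]
      rw [h1, ofReal_integral_eq_lintegral_ofReal hgint.integrableOn
        (ae_of_all _ hgnonneg)]
    have hrn : ∀ᵐ x, HasDerivAt F (g x) x := by
      filter_upwards [S.ae_hasDerivAt,
        Measure.rnDeriv_withDensity volume hgmeas.ennreal_ofReal] with x hx h2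
      rw [hSmeas] at hx
      rw [h2] at hx
      rw [ENNReal.toReal_ofReal (hgnonneg x)] at hx
      exact hx
    filter_upwards [hrn] with x hx hmem
    have hx1 : x ∈ Set.Ioo a b := ⟨hc.trans hmem.1, hmem.2.trans hd⟩
    have hxmem : x ∈ Set.Icc c' d' :=
      ⟨le_of_lt (hc'2.trans hmem.1), le_of_lt (hmem.2.trans hd'1)⟩
    have hgx : g x = 1 / lam x := Set.indicator_of_mem hxmem (fun r => 1 / lam r)
    have heq : Set.EqOn σ (fun y => σ c' + F y) (Set.Ioo c d) := by
      intro y hy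
      have hy1 : y ∈ Set.Ioo a b := ⟨hc.trans hy.1, hy.2.trans hd⟩
      have h2 : σ y - σ c' = ∫ r in c'..y, 1 / lam r := hσdiff c' y hc'Ioo hy1
      have h3 : (∫ r in c'..y, 1 / lam r) = F y := by
        rw [hFdef]
        simp only
        refine intervalIntegral.integral_congr fun z hz => ?_
        have hz' : z ∈ Set.Icc c' d' := by
          have h4 : Set.uIcc c' y = Set.Icc c' y := Set.uIcc_of_le (by linarith [hy.1])
          rw [h4] at hz
          exact ⟨hz.1, le_trans hz.2 (by linarith [hy.2])⟩
        exact (Set.indicator_of_mem hz' (fun r => 1 / lam r)).symm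
      have : σ y = σ c' + F y := by rw [← h3]; linarith
      simpa using this
    have hev : σ =ᶠ[nhds x] fun y => σ c' + F y :=
      Filter.eventuallyEq_of_mem (Ioo_mem_nhds hmem.1 hmem.2) heq
    have hder : HasDerivAt (fun y => σ c' + F y) (1 / lam x) x := by
      rw [← hgx]; exact hx.const_add (σ c')
    exact hder.congr_of_eventuallyEq hev
  -- a.e. derivative of σ on (a,b)
  have hσae : ∀ᵐ s, s ∈ Set.Ioo a b → HasDerivAt σ (1 / lam s) s := by
    rw [ae_iff]
    have hsub : {s | ¬(s ∈ Set.Ioo a b → HasDerivAt σ (1 / lam s) s)} ⊆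
        ⋃ n : ℕ, {s | ¬(s ∈ Set.Ioo (cs n) (ds n) → HasDerivAt σ (1 / lam s) s)} := by
      intro s hs
      simp only [Set.mem_setOf_eq, Classical.not_imp] at hs ⊢
      obtain ⟨hsm, hnd⟩ := hs
      obtain ⟨n, h1, h2⟩ := hcover s hsm
      exact Set.mem_iUnion.2 ⟨n, ⟨h1, h2⟩, hnd⟩
    refine measure_mono_null hsub (measure_iUnion_null fun n => ?_)
    exact ae_iff.1 (hcompact (cs n) (ds n) (hcsa n) (hdsb n))
  have hθ' : ∀ᵐ s, s ∈ Set.Ioo a b → HasDerivAt θ (θ' s) s :=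
    (ae_restrict_iff' measurableSet_Ioo).1 hθderiv
  have hfl : ∀ᵐ s, s ∈ Set.Ioo a b → lam s • θ' s + gradient E (θ s) = 0 :=
    (ae_restrict_iff' measurableSet_Ioo).1 hflow
  have hPae : ∀ᵐ s, s ∈ Set.Ioo a b →
      (HasDerivAt σ (1 / lam s) s ∧ HasDerivAt θ (θ' s) s ∧
        lam s • θ' s + gradient E (θ s) = 0) := by
    filter_upwards [hσae, hθ', hfl] with s h1 h2 h3 hs
    exact ⟨h1 hs, h2 hs, h3 hs⟩
  set N : Set ℝ := {s | s ∈ Set.Ioo a b ∧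
    ¬(HasDerivAt σ (1 / lam s) s ∧ HasDerivAt θ (θ' s) s ∧
      lam s • θ' s + gradient E (θ s) = 0)} with hNdef
  have hN : volume N = 0 := by
    refine measure_mono_null (fun s hs => ?_) (ae_iff.1 hPae)
    simp only [Set.mem_setOf_eq, Classical.not_imp]
    exact hs
  -- image of N is null
  have hT : volume (σ '' N) = 0 := by
    have hcov2 : σ '' N ⊆ ⋃ n : ℕ, σ '' (N ∩ Set.Icc (cs n) (ds n)) := by
      rintro τ ⟨s, hs, rfl⟩
      obtain ⟨n, h1, h2⟩ := hcover s hs.1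
      exact Set.mem_iUnion.2 ⟨n, Set.mem_image_of_mem σ ⟨hs, le_of_lt h1, le_of_lt h2⟩⟩
    refine measure_mono_null hcov2 (measure_iUnion_null fun n => ?_)
    rcases le_or_gt (cs n) (ds n) with h | h
    · obtain ⟨K, hK⟩ := lip (cs n) (ds n) (hcsa n) h (hdsb n)
      have hK2 : LipschitzOnWith K σ (N ∩ Set.Icc (cs n) (ds n)) :=
        hK.mono Set.inter_subset_right
      have hK' := hK2.hausdorffMeasure_image_le (zero_le_one (α := ℝ))
      rw [← MeasureTheory.hausdorffMeasure_real]
      refine le_antisymm (le_trans hK' ?_) zero_le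
      rw [ENNReal.rpow_one, MeasureTheory.hausdorffMeasure_real]
      rw [measure_mono_null Set.inter_subset_left hN, mul_zero]
    · have : Set.Icc (cs n) (ds n) = ∅ := Set.Icc_eq_empty (not_le.2 h)
      simp [this]
  -- the inverse function
  set 𝔰 : ℝ → ℝ := Function.invFunOn σ (Set.Ioo a b) with h𝔰def
  have hinj : Set.InjOn σ (Set.Ioo a b) := smono.injOn
  have hleft : ∀ s ∈ Set.Ioo a b, 𝔰 (σ s) = s := fun s hs =>
    hinj.leftInvOn_invFunOn hs
  have hmaps : Set.MapsTo 𝔰 (σ '' Set.Ioo a b) (Set.Ioo a b) := by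
    rintro τ ⟨s, hs, rfl⟩
    exact Function.invFunOn_mem ⟨s, hs, rfl⟩
  have hright : ∀ τ ∈ σ '' Set.Ioo a b, σ (𝔰 τ) = τ := by
    rintro τ ⟨s, hs, rfl⟩
    exact Function.invFunOn_eq ⟨s, hs, rfl⟩
  -- openness of the image
  have hopen : IsOpen (σ '' Set.Ioo a b) := by
    rw [isOpen_iff_mem_nhds]
    rintro τ ⟨s, hs, rfl⟩
    have hc1 : a < (a + s) / 2 := by linarith [hs.1]
    have hcs' : (a + s) / 2 < s := by linarith [hs.1]
    have hsd : s < (s + b) / 2 := by linarith [hs.2]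
    have hd1 : (s + b) / 2 < b := by linarith [hs.2]
    have hsub : Set.Ioo ((a + s) / 2) ((s + b) / 2) ⊆ Set.Ioo a b :=
      fun z hz => ⟨hc1.trans hz.1, hz.2.trans hd1⟩
    obtain ⟨K, hK⟩ := lip ((a + s) / 2) ((s + b) / 2) hc1 (by linarith) hd1
    have hIm : Set.Ioo (σ ((a + s) / 2)) (σ ((s + b) / 2)) ⊆
        σ '' Set.Ioo ((a + s) / 2) ((s + b) / 2) :=
      intermediate_value_Ioo (by linarith) hK.continuousOn
    have h1 : σ ((a + s) / 2) < σ s :=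
      smono ⟨hc1, by linarith [hs.2]⟩ hs hcs'
    have h2 : σ s < σ ((s + b) / 2) :=
      smono hs ⟨by linarith [hs.1], hd1⟩ hsd
    exact Filter.mem_of_superset (Ioo_mem_nhds h1 h2)
      (hIm.trans ((Set.image_mono (f := σ) hsub)))
  -- continuity of 𝔰 on the image
  have hscont : ∀ s ∈ Set.Ioo a b, ContinuousAt 𝔰 (σ s) := by
    intro s hs
    have hmem : σ '' Set.Ioo a b ∈ nhds (σ s) :=
      hopen.mem_nhds (Set.mem_image_of_mem σ hs)
    refine ContinuousWithinAt.continuousAt ?_ hmem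
    rw [Metric.continuousWithinAt_iff]
    intro ε hε
    set u := max (s - ε / 2) ((a + s) / 2) with hudef
    set v := min (s + ε / 2) ((s + b) / 2) with hvdef
    have hau : a < u :=
      lt_of_lt_of_le (by linarith [hs.1]) (le_max_right _ _)
    have hus : u < s := max_lt (by linarith) (by linarith [hs.1])
    have hsv : s < v := lt_min (by linarith) (by linarith [hs.2])
    have hvb : v < b := lt_of_le_of_lt (min_le_right _ _) (by linarith [hs.2])
    have huIoo : u ∈ Set.Ioo a b := ⟨hau, hus.trans hs.2⟩
    have hvIoo : v ∈ Set.Ioo a b := ⟨hs.1.trans hsv, hvb⟩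
    have h1 : σ u < σ s := smono huIoo hs hus
    have h2 : σ s < σ v := smono hs hvIoo hsv
    refine ⟨min (σ s - σ u) (σ v - σ s), lt_min (by linarith) (by linarith), ?_⟩
    rintro x ⟨w, hw, rfl⟩ hdist
    rw [Real.dist_eq] at hdist
    have habs := abs_lt.1 hdist
    have hmin1 : min (σ s - σ u) (σ v - σ s) ≤ σ s - σ u := min_le_left _ _
    have hmin2 : min (σ s - σ u) (σ v - σ s) ≤ σ v - σ s := min_le_right _ _
    have hd1 : σ u < σ w := by linarith [habs.1]
    have hd2 : σ w < σ v := by linarith [habs.2]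
    have hwu : u < w := by
      by_contra hcon
      push_neg at hcon
      have := smono.monotoneOn hw huIoo hcon
      linarith
    have hwv : w < v := by
      by_contra hcon
      push_neg at hcon
      have := smono.monotoneOn hvIoo hw hcon
      linarith
    rw [Real.dist_eq, hleft w hw, hleft s hs]
    have hv1 : v ≤ s + ε / 2 := min_le_left _ _
    have hu1 : s - ε / 2 ≤ u := le_max_left _ _
    rw [abs_lt]
    constructor <;> linarith
  -- main a.e. statement
  have himm : MeasurableSet (σ '' Set.Ioo a b) := hopen.measurableSet
  have key : ∀ᵐ τ, τ ∈ σ '' Set.Ioo a b →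
      (HasDerivAt 𝔰 (lam (𝔰 τ)) τ ∧
        HasDerivAt (fun τ' => θ (𝔰 τ')) (-gradient E (θ (𝔰 τ))) τ) := by
    have hTc : ∀ᵐ τ, τ ∉ σ '' N := measure_eq_zero_iff_ae_notMem.1 hT
    filter_upwards [hTc] with τ hτT hτ
    obtain ⟨s, hs, rfl⟩ := hτ
    have hP : HasDerivAt σ (1 / lam s) s ∧ HasDerivAt θ (θ' s) s ∧
        lam s • θ' s + gradient E (θ s) = 0 := by
      by_contra h
      exact hτT ⟨s, ⟨hs, h⟩, rfl⟩
    obtain ⟨hP1, hP2, hP3⟩ := hP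
    have hls : 0 < lam s := hlampos s hs
    have h𝔰τ : 𝔰 (σ s) = s := hleft s hs
    have hder𝔰 : HasDerivAt 𝔰 (lam s) (σ s) := by
      have hfg : ∀ᶠ y in nhds (σ s), σ (𝔰 y) = y :=
        Filter.eventually_of_mem (hopen.mem_nhds (Set.mem_image_of_mem σ hs)) hright
      have hP1' : HasDerivAt σ (1 / lam s) (𝔰 (σ s)) := by rw [h𝔰τ]; exact hP1
      have hinv := HasDerivAt.of_local_left_inverse (hscont s hs)
        hP1' (by positivity) hfg
      simpa [one_div] using hinv
    constructor
    · rw [h𝔰τ]; exact hder𝔰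
    · have hP2' : HasDerivAt θ (θ' s) (𝔰 (σ s)) := by rw [h𝔰τ]; exact hP2
      have hcomp : HasDerivAt (θ ∘ 𝔰) (lam s • θ' s) (σ s) :=
        HasDerivAt.scomp (σ s) hP2' hder𝔰
      have hflip : lam s • θ' s = -gradient E (θ s) :=
        eq_neg_of_add_eq_zero_left hP3
      rw [h𝔰τ]
      rw [← hflip]
      exact hcomp
  refine ⟨lip, smono, 𝔰, hleft, hmaps, ?_, ?_⟩
  · exact (ae_restrict_iff' himm).2 (key.mono fun τ h hτ => (h hτ).1)
  · exact (ae_restrict_iff' himm).2 (key.mono fun τ h hτ => (h hτ).2)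
end

section
/- Let X be a finite-dimensional Hilbert space, E : X → [0,∞) of class C¹ with E(x*) = 0, and suppose E satisfies the Łojasiewicz inequality near x*: there exist θ ∈ (0,1), C > 0, R > 0 such that E(v)^θ ≤ C‖DE(v)‖ for all v ∈ B_R(x*). Let θ̃ : [σ₀, σ₁) → X be a locally absolutely continuous solution of the gradient flow θ̃'(σ) + DE(θ̃(σ)) = 0 with θ̃(σ) ∈ B_R(x*) for all σ, and with E(θ̃(σ)) > 0. Then the length of θ̃ is finite: ∫_{σ₀}^{σ̃} ‖θ̃'(σ)‖ dσ ≤ (C/(1−θ))·E(θ̃(σ₀))^{1−θ} for every σ̃ ∈ (σ₀, σ₁). -/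
open MeasureTheory Filter Set intervalIntegral Metric

/-- Finite length of gradient-flow trajectories under the Łojasiewicz inequality:
`∫_{σ₀}^{σ̃} ‖θ̃'(σ)‖ dσ ≤ (C/(1-θ)) E(θ̃(σ₀))^{1-θ}`. -/
theorem stmt10
    {X : Type*} [NormedAddCommGroup X] [InnerProductSpace ℝ X] [FiniteDimensional ℝ X]
    (E : X → ℝ) (hE : ContDiff ℝ 1 E) (hEnn : ∀ v, 0 ≤ E v)
    (xstar : X) (hxstar : E xstar = 0)
    (θ C R : ℝ) (hθ : θ ∈ Set.Ioo (0:ℝ) 1) (hC : 0 < C) (hR : 0 < R)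
    (hLoja : ∀ v ∈ Metric.ball xstar R, (E v) ^ θ ≤ C * ‖gradient E v‖)
    (σ₀ σ₁ : ℝ) (hσ : σ₀ < σ₁) (θt : ℝ → X)
    (hflow : ∀ σ ∈ Set.Ico σ₀ σ₁, HasDerivAt θt (-gradient E (θt σ)) σ)
    (hball : ∀ σ ∈ Set.Ico σ₀ σ₁, θt σ ∈ Metric.ball xstar R)
    (hEpos : ∀ σ ∈ Set.Ico σ₀ σ₁, 0 < E (θt σ)) :
    ∀ σt ∈ Set.Ioo σ₀ σ₁,
      (∫ σ in σ₀..σt, ‖deriv θt σ‖) ≤ (C / (1 - θ)) * (E (θt σ₀)) ^ (1 - θ) := by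
  obtain ⟨hθ0, hθ1⟩ := hθ
  have h1θ : (0:ℝ) < 1 - θ := by linarith
  intro σt hσt
  obtain ⟨hσt0, hσt1⟩ := hσt
  have hle : σ₀ ≤ σt := hσt0.le
  have hsub : Set.Icc σ₀ σt ⊆ Set.Ico σ₀ σ₁ := fun x hx =>
    ⟨hx.1, lt_of_le_of_lt hx.2 hσt1⟩
  have hgradcont : Continuous (gradient E) := by
    have h := hE.continuous_fderiv one_ne_zero
    have heq : gradient E = fun x => (InnerProductSpace.toDual ℝ X).symm (fderiv ℝ E x) := rfl
    rw [heq]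
    exact (InnerProductSpace.toDual ℝ X).symm.continuous.comp h
  have hθtcont : ContinuousOn θt (Set.Icc σ₀ σt) := fun x hx =>
    ((hflow x (hsub hx)).continuousAt).continuousWithinAt
  set F' : ℝ → ℝ := fun σ => C * (E (θt σ)) ^ (-θ) * ‖gradient E (θt σ)‖^2 with hF'
  set F : ℝ → ℝ := fun σ => -(C/(1-θ)) * (E (θt σ)) ^ (1-θ) with hF
  have hderivF : ∀ σ ∈ Set.Icc σ₀ σt, HasDerivAt F (F' σ) σ := by
    intro σ hσm
    have hmem := hsub hσm
    have hd := hflow σ hmem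
    have hEg : HasGradientAt E (gradient E (θt σ)) (θt σ) :=
      ((hE.differentiable one_ne_zero) (θt σ)).hasGradientAt
    have hcomp : HasDerivAt (fun s => E (θt s)) (-‖gradient E (θt σ)‖^2) σ := by
      have h2 := hEg.hasFDerivAt.comp_hasDerivAt σ hd
      refine h2.congr_deriv ?_
      rw [InnerProductSpace.toDual_apply_apply]
      simp [real_inner_self_eq_norm_sq]
    have hEne : E (θt σ) ≠ 0 := ne_of_gt (hEpos σ hmem)
    have hrpow := (hcomp.rpow_const (p := 1-θ) (Or.inl hEne)).const_mul (-(C/(1-θ)))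
    refine hrpow.congr_deriv ?_
    have h3 : (1 - θ - 1 : ℝ) = -θ := by ring
    rw [h3]
    field_simp
    ring
  have hkey : ∀ σ ∈ Set.Icc σ₀ σt, ‖gradient E (θt σ)‖ ≤ F' σ := by
    intro σ hσm
    have hmem := hsub hσm
    have hEp := hEpos σ hmem
    have hL := hLoja (θt σ) (hball σ hmem)
    have hEθ : 0 < (E (θt σ)) ^ θ := Real.rpow_pos_of_pos hEp θ
    have hg : 0 < ‖gradient E (θt σ)‖ := by nlinarith
    have hEneg : (E (θt σ)) ^ (-θ) = ((E (θt σ)) ^ θ)⁻¹ := Real.rpow_neg hEp.le θ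
    have h2 : ‖gradient E (θt σ)‖ * (E (θt σ))^θ ≤ C * ‖gradient E (θt σ)‖^2 := by
      nlinarith [mul_le_mul_of_nonneg_left hL (norm_nonneg (gradient E (θt σ)))]
    have h5 : ‖gradient E (θt σ)‖ ≤ (C * ‖gradient E (θt σ)‖^2) / (E (θt σ))^θ :=
      (le_div_iff₀ hEθ).mpr h2
    have h6 : C * ((E (θt σ))^θ)⁻¹ * ‖gradient E (θt σ)‖^2
        = (C * ‖gradient E (θt σ)‖^2) / (E (θt σ))^θ := by ring
    rw [hF']
    simp only
    rw [hEneg, h6]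
    exact h5
  have hEc : ContinuousOn (fun σ => E (θt σ)) (Set.Icc σ₀ σt) :=
    hE.continuous.comp_continuousOn hθtcont
  have hgc : ContinuousOn (fun σ => ‖gradient E (θt σ)‖) (Set.Icc σ₀ σt) :=
    (hgradcont.comp_continuousOn hθtcont).norm
  have hF'c : ContinuousOn F' (Set.Icc σ₀ σt) := by
    apply ContinuousOn.mul
    · exact continuousOn_const.mul (hEc.rpow_const fun x hx => Or.inl (ne_of_gt (hEpos x (hsub hx))))
    · exact hgc.pow 2
  have hintF' : IntervalIntegrable F' volume σ₀ σt :=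
    (hF'c.mono (by rw [Set.uIcc_of_le hle])).intervalIntegrable
  have hintg : IntervalIntegrable (fun σ => ‖gradient E (θt σ)‖) volume σ₀ σt :=
    (hgc.mono (by rw [Set.uIcc_of_le hle])).intervalIntegrable
  have hcongr : (∫ σ in σ₀..σt, ‖deriv θt σ‖) = ∫ σ in σ₀..σt, ‖gradient E (θt σ)‖ := by
    apply intervalIntegral.integral_congr
    intro x hx
    rw [Set.uIcc_of_le hle] at hx
    show ‖deriv θt x‖ = ‖gradient E (θt x)‖
    rw [(hflow x (hsub hx)).deriv, norm_neg]
  have hftc : (∫ σ in σ₀..σt, F' σ) = F σt - F σ₀ :=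
    intervalIntegral.integral_eq_sub_of_hasDerivAt
      (fun x hx => hderivF x (by rwa [Set.uIcc_of_le hle] at hx)) hintF'
  have hmono : (∫ σ in σ₀..σt, ‖gradient E (θt σ)‖) ≤ ∫ σ in σ₀..σt, F' σ :=
    intervalIntegral.integral_mono_on hle hintg hintF' hkey
  have hpos0 : (0:ℝ) ≤ (E (θt σt)) ^ (1-θ) :=
    Real.rpow_nonneg (hEnn _) _
  have hCdiv : 0 < C / (1-θ) := div_pos hC h1θ
  rw [hcongr]
  calc (∫ σ in σ₀..σt, ‖gradient E (θt σ)‖) ≤ F σt - F σ₀ := by rw [← hftc]; exact hmono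
    _ = (C/(1-θ)) * (E (θt σ₀)) ^ (1-θ) - (C/(1-θ)) * (E (θt σt)) ^ (1-θ) := by
        rw [hF]; ring
    _ ≤ (C/(1-θ)) * (E (θt σ₀)) ^ (1-θ) := by nlinarith
end

section
/- Let X be a finite-dimensional Hilbert space, E : [0,T] × X → [0,∞) of class C¹ with power control |∂ₜE(t,u)| ≤ C₁E(t,u) + C₂, and let (εₙ)ₙ be a null sequence with uₙ ∈ H¹(0,T;X) solving εₙuₙ' + DE(t,uₙ) = 0 a.e., with initial data uₙ(0) → u₀. Then there exists a constant C > 0 such that for all n: sup_{t∈[0,T]} E(t,uₙ(t)) ≤ C and ∫₀ᵀ ( (εₙ/2)‖uₙ'(r)‖² + (1/(2εₙ))‖DE(r,uₙ(r))‖² ) dr ≤ C. -/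
open MeasureTheory Filter Set intervalIntegral Topology

/-- Integral form of Gronwall's inequality. -/
lemma gronwall_int {g : ℝ → ℝ} {T K c δ : ℝ} (hT : 0 < T) (hK : 0 < K)
    (hg : ContinuousOn g (Set.Icc 0 T))
    (hbd : ∀ t ∈ Set.Icc (0:ℝ) T, g t ≤ δ + ∫ r in (0:ℝ)..t, (K * g r + c)) :
    ∀ t ∈ Set.Icc (0:ℝ) T, g t ≤ δ + gronwallBound 0 K (K * δ + c) t := by
  set h : ℝ → ℝ := fun r => K * g r + c with hh
  have hhcont : ContinuousOn h (Set.Icc 0 T) :=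
    (continuousOn_const.mul hg).add continuousOn_const
  set F : ℝ → ℝ := fun x => ∫ r in (0:ℝ)..x, h r with hF
  have hFcont : ContinuousOn F (Set.Icc 0 T) := by
    have hint : IntegrableOn h (Set.uIcc 0 T) volume := by
      rw [Set.uIcc_of_le hT.le]
      exact hhcont.integrableOn_Icc
    simpa [Set.uIcc_of_le hT.le] using continuousOn_primitive_interval (a := (0:ℝ)) hint
  have hF' : ∀ x ∈ Set.Ico (0:ℝ) T, HasDerivWithinAt F (h x) (Set.Ici x) x := by
    intro x hx
    have hsub : Set.Icc x T ⊆ Set.Icc 0 T := Set.Icc_subset_Icc hx.1 le_rfl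
    have hintx : IntervalIntegrable h volume 0 x := by
      apply ContinuousOn.intervalIntegrable
      rw [Set.uIcc_of_le hx.1]
      exact hhcont.mono (Set.Icc_subset_Icc le_rfl hx.2.le)
    have hmemIoi : Set.Icc x T ∈ 𝓝[>] x := by
      refine mem_nhdsWithin.mpr ⟨Set.Iio T, isOpen_Iio, hx.2, ?_⟩
      rintro y ⟨hy1, hy2⟩
      exact ⟨le_of_lt hy2, hy1.le⟩
    have hmeas : StronglyMeasurableAtFilter h (𝓝[>] x) volume :=
      ⟨Set.Icc x T, hmemIoi, (hhcont.mono hsub).aestronglyMeasurable measurableSet_Icc⟩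
    have hle : 𝓝[Set.Ioi x] x ≤ 𝓝[Set.Icc 0 T] x := by
      refine nhdsWithin_le_iff.mpr (mem_nhdsWithin.mpr ⟨Set.Iio T, isOpen_Iio, hx.2, ?_⟩)
      rintro y ⟨hy1, hy2⟩
      exact ⟨hx.1.trans hy2.le, hy1.le⟩
    have hcw : ContinuousWithinAt h (Set.Ioi x) x :=
      (hhcont x ⟨hx.1, hx.2.le⟩).mono_left hle
    exact intervalIntegral.integral_hasDerivWithinAt_right hintx hmeas hcw
  have key := le_gronwallBound_of_liminf_deriv_right_le (f := F) (f' := fun x => h x)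
    (δ := 0) (K := K) (ε := K * δ + c) (a := 0) (b := T) hFcont
    (fun x hx r hr => (hF' x hx).liminf_right_slope_le hr)
    (by simp [hF])
    (by
      intro x hx
      have hb' : g x ≤ δ + F x := hbd x ⟨hx.1, hx.2.le⟩
      show K * g x + c ≤ K * F x + (K * δ + c)
      nlinarith [hK.le, hb'])
  intro t ht
  have h1 : g t ≤ δ + F t := hbd t ht
  have h2 : F t ≤ gronwallBound 0 K (K * δ + c) (t - 0) := key t ht
  rw [sub_zero] at h2
  linarith

/-- A priori estimates for the viscous gradient flows: uniform energy bound and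
uniform bound on the symmetric dissipation integrals. -/
theorem stmt14
    {X : Type*} [NormedAddCommGroup X] [InnerProductSpace ℝ X] [FiniteDimensional ℝ X]
    (T : ℝ) (hT : 0 < T) (E P : ℝ → X → ℝ)
    (hEC1 : ContDiff ℝ 1 (fun p : ℝ × X => E p.1 p.2))
    (hEnn : ∀ t u, 0 ≤ E t u)
    (hP : ∀ u : X, ∀ t : ℝ, HasDerivAt (fun s => E s u) (P t u) t)
    (C₁ C₂ : ℝ) (hC₁ : 0 < C₁) (hC₂ : 0 < C₂)
    (hpow : ∀ t ∈ Set.Icc (0:ℝ) T, ∀ u : X, |P t u| ≤ C₁ * E t u + C₂)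
    (ε : ℕ → ℝ) (hεpos : ∀ n, 0 < ε n) (hε0 : Filter.Tendsto ε Filter.atTop (nhds 0))
    (u : ℕ → ℝ → X) (u' : ℕ → ℝ → X)
    (hucont : ∀ n, ContinuousOn (u n) (Set.Icc 0 T))
    (huderiv : ∀ n, ∀ᵐ t ∂(volume.restrict (Set.Ioo (0:ℝ) T)),
      HasDerivAt (u n) (u' n t) t)
    -- the gradient flow equation
    (hflow : ∀ n, ∀ᵐ t ∂(volume.restrict (Set.Ioo (0:ℝ) T)),
      ε n • u' n t + gradient (E t) (u n t) = 0)
    -- the energy identity, holding for each solution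
    (hen : ∀ n, ∀ s ∈ Set.Icc (0:ℝ) T, ∀ t ∈ Set.Icc (0:ℝ) T, s ≤ t →
      (∫ r in s..t, ((ε n / 2) * ‖u' n r‖ ^ 2
          + (1 / (2 * ε n)) * ‖gradient (E r) (u n r)‖ ^ 2)) + E t (u n t)
        = E s (u n s) + ∫ r in s..t, P r (u n r))
    -- convergence of the initial data
    (u₀ : X) (hu0 : Filter.Tendsto (fun n => u n 0) Filter.atTop (nhds u₀)) :
    ∃ C > 0, ∀ n,
      (∀ t ∈ Set.Icc (0:ℝ) T, E t (u n t) ≤ C) ∧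
      (∫ r in (0:ℝ)..T, ((ε n / 2) * ‖u' n r‖ ^ 2
          + (1 / (2 * ε n)) * ‖gradient (E r) (u n r)‖ ^ 2)) ≤ C := by
  have hEcont : Continuous (fun p : ℝ × X => E p.1 p.2) := hEC1.continuous
  -- P is the partial derivative in time, hence continuous
  have hPeq : ∀ t v, P t v = fderiv ℝ (fun p : ℝ × X => E p.1 p.2) (t, v) (1, 0) := by
    intro t v
    have h1 : HasFDerivAt (fun p : ℝ × X => E p.1 p.2)
        (fderiv ℝ (fun p : ℝ × X => E p.1 p.2) (t, v)) (t, v) :=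
      (hEC1.differentiable one_ne_zero (t, v)).hasFDerivAt
    have h3 : HasDerivAt (fun s : ℝ => (s, v)) ((1:ℝ), (0:X)) t :=
      (hasDerivAt_id t).prodMk (hasDerivAt_const t v)
    have h2 := h1.comp_hasDerivAt t h3
    exact (hP v t).unique h2
  have hPcont : Continuous (fun p : ℝ × X => P p.1 p.2) := by
    have hc : Continuous fun p : ℝ × X =>
        (fderiv ℝ (fun q : ℝ × X => E q.1 q.2) p) (1, 0) :=
      (hEC1.continuous_fderiv one_ne_zero).clm_apply continuous_const
    have : (fun p : ℝ × X => P p.1 p.2)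
        = fun p : ℝ × X => (fderiv ℝ (fun q : ℝ × X => E q.1 q.2) p) (1, 0) :=
      funext fun p => hPeq p.1 p.2
    rw [this]; exact hc
  -- bound on initial energies
  have hE0 : Filter.Tendsto (fun n => E 0 (u n 0)) Filter.atTop (nhds (E 0 u₀)) := by
    have h1 : Filter.Tendsto (fun n => ((0:ℝ), u n 0)) Filter.atTop (nhds ((0:ℝ), u₀)) :=
      tendsto_const_nhds.prodMk_nhds hu0
    exact (hEcont.tendsto ((0:ℝ), u₀)).comp h1
  obtain ⟨M₀, hM₀⟩ := hE0.bddAbove_range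
  set M : ℝ := max M₀ 0 with hMdef
  have hM : ∀ n, E 0 (u n 0) ≤ M :=
    fun n => le_trans (hM₀ ⟨n, rfl⟩) (le_max_left _ _)
  have hMnn : (0:ℝ) ≤ M := le_max_right _ _
  clear_value M
  set c : ℝ := C₁ * M + C₂ with hcdef
  have hcnn : 0 ≤ c := by positivity
  clear_value c
  set K : ℝ := M + gronwallBound 0 C₁ c T with hKdef
  have hgbT : gronwallBound 0 C₁ c T = c / C₁ * (Real.exp (C₁ * T) - 1) := by
    rw [gronwallBound_of_K_ne_0 hC₁.ne']; ring
  have hgbTnn : 0 ≤ gronwallBound 0 C₁ c T := by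
    rw [hgbT]
    have : (1:ℝ) ≤ Real.exp (C₁ * T) := Real.one_le_exp (by positivity)
    have h1 : 0 ≤ c / C₁ := by positivity
    nlinarith
  have hKM : M ≤ K := by simp [hKdef, hgbTnn]
  have hKnn : 0 ≤ K := hMnn.trans hKM
  clear_value K
  -- the energy bound for each n
  have hEbd : ∀ n, ∀ t ∈ Set.Icc (0:ℝ) T, E t (u n t) ≤ K := by
    intro n
    set f : ℝ → ℝ := fun t => E t (u n t) with hf
    have hfcont : ContinuousOn f (Set.Icc 0 T) :=
      hEcont.comp_continuousOn (continuousOn_id.prodMk (hucont n))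
    have hPn : ContinuousOn (fun r => P r (u n r)) (Set.Icc 0 T) :=
      hPcont.comp_continuousOn (continuousOn_id.prodMk (hucont n))
    have hbd : ∀ t ∈ Set.Icc (0:ℝ) T, f t ≤ M + ∫ r in (0:ℝ)..t, (C₁ * f r + C₂) := by
      intro t ht
      have hid := hen n 0 ⟨le_rfl, hT.le⟩ t ht ht.1
      have hdiss : 0 ≤ ∫ r in (0:ℝ)..t, ((ε n / 2) * ‖u' n r‖ ^ 2
          + (1 / (2 * ε n)) * ‖gradient (E r) (u n r)‖ ^ 2) := by
        apply intervalIntegral.integral_nonneg ht.1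
        intro r _
        have := hεpos n
        positivity
      have hsub : Set.Icc 0 t ⊆ Set.Icc (0:ℝ) T :=
        Set.Icc_subset_Icc le_rfl ht.2
      have hintP : IntervalIntegrable (fun r => P r (u n r)) volume 0 t := by
        apply ContinuousOn.intervalIntegrable
        rw [Set.uIcc_of_le ht.1]
        exact hPn.mono hsub
      have hintf : IntervalIntegrable (fun r => C₁ * f r + C₂) volume 0 t := by
        apply ContinuousOn.intervalIntegrable
        rw [Set.uIcc_of_le ht.1]
        exact ((continuousOn_const.mul hfcont).add continuousOn_const).mono hsub
      have hPle : (∫ r in (0:ℝ)..t, P r (u n r))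
          ≤ ∫ r in (0:ℝ)..t, (C₁ * f r + C₂) := by
        apply intervalIntegral.integral_mono_on ht.1 hintP hintf
        intro r hr
        exact le_trans (le_abs_self _) (hpow r (hsub hr) (u n r))
      have hM0 := hM n
      simp only [hf] at *
      linarith
    have hg := gronwall_int hT hC₁ hfcont hbd
    intro t ht
    have h1 := hg t ht
    have h2 : gronwallBound 0 C₁ (C₁ * M + C₂) t ≤ gronwallBound 0 C₁ c T := by
      simp only [gronwallBound_of_K_ne_0 hC₁.ne', zero_mul, zero_add]
      have hexp : Real.exp (C₁ * t) ≤ Real.exp (C₁ * T) :=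
        Real.exp_le_exp.mpr (by nlinarith [ht.2, hC₁.le])
      have h4 : (C₁ * M + C₂) = c := hcdef.symm
      have h3 : 0 ≤ c / C₁ := by positivity
      rw [h4]
      exact mul_le_mul_of_nonneg_left (by linarith) h3
    calc f t ≤ M + gronwallBound 0 C₁ (C₁ * M + C₂) t := h1
      _ ≤ M + gronwallBound 0 C₁ c T := by linarith
      _ = K := hKdef.symm
  -- final constant
  have hprod : 0 ≤ (C₁ * K + C₂) * T :=
    mul_nonneg (add_nonneg (mul_nonneg hC₁.le hKnn) hC₂.le) hT.le
  refine ⟨K + (C₁ * K + C₂) * T + 1, by linarith, fun n => ?_⟩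
  constructor
  · intro t ht
    have := hEbd n t ht
    linarith
  · -- dissipation bound
    have hid := hen n 0 ⟨le_rfl, hT.le⟩ T ⟨hT.le, le_rfl⟩ hT.le
    have hPn : ContinuousOn (fun r => P r (u n r)) (Set.Icc 0 T) :=
      hPcont.comp_continuousOn (continuousOn_id.prodMk (hucont n))
    have hintP : IntervalIntegrable (fun r => P r (u n r)) volume 0 T := by
      apply ContinuousOn.intervalIntegrable
      rwa [Set.uIcc_of_le hT.le]
    have hintc : IntervalIntegrable (fun _ : ℝ => C₁ * K + C₂) volume 0 T :=
      intervalIntegrable_const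
    have hPle : (∫ r in (0:ℝ)..T, P r (u n r))
        ≤ ∫ r in (0:ℝ)..T, (C₁ * K + C₂ : ℝ) := by
      apply intervalIntegral.integral_mono_on hT.le hintP hintc
      intro r hr
      have h1 := hEbd n r hr
      have h2 := le_trans (le_abs_self _) (hpow r hr (u n r))
      nlinarith
    have hconst : (∫ _r in (0:ℝ)..T, (C₁ * K + C₂ : ℝ)) = (C₁ * K + C₂) * T := by
      rw [intervalIntegral.integral_const]
      simp [mul_comm]
    have hET : 0 ≤ E T (u n T) := hEnn T (u n T)
    have hM0 : E 0 (u n 0) ≤ M := hM n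
    have hMK : M ≤ K := hKM
    rw [hconst] at hPle
    nlinarith [hid, hPle, hET, hM0, hMK]
end

section
/- Let μₙ, μ be positive Radon measures on [0,T] with μₙ ⇀* μ, and let 𝓔ₙ(t) → 𝓔(t) pointwise on [0,T] with 𝓔 ∈ BV([0,T]), and Pₙ ⇀* P in L^∞(0,T), satisfying for each n the identity μₙ([s,t]) = 𝓔ₙ(s) − 𝓔ₙ(t) + ∫ₛᵗ Pₙ(r) dr for all 0 ≤ s ≤ t ≤ T. Then μ([s,t]) + 𝓔₊(t) = 𝓔₋(s) + ∫ₛᵗ P(r) dr for all 0 ≤ s ≤ t ≤ T, where 𝓔₋, 𝓔₊ denote left and right limits of 𝓔 (with 𝓔₋(0) := 𝓔(0), 𝓔₊(T) := 𝓔(T)). In particular, μ({t}) = 𝓔₋(t) − 𝓔₊(t) for every t. -/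
open MeasureTheory Filter Set intervalIntegral
open Topology

/-- A piecewise-linear bump function equal to 1 on `Icc s t`, vanishing outside
`Icc (s-ε) (t+ε)`, with values in `[0,1]`. -/
lemma stmt16_bump (s t ε : ℝ) (hst : s ≤ t) (hε : 0 < ε) :
    ∃ φ : ℝ → ℝ, Continuous φ ∧ (∀ x, 0 ≤ φ x) ∧ (∀ x, φ x ≤ 1) ∧
      (∀ x ∈ Icc s t, φ x = 1) ∧ ∀ x ∉ Icc (s - ε) (t + ε), φ x = 0 := by
  refine ⟨fun x => max 0 (1 - Metric.infDist x (Icc s t) / ε), ?_, ?_, ?_, ?_, ?_⟩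
  · exact continuous_const.max
      (continuous_const.sub ((Metric.continuous_infDist_pt _).div_const ε))
  · intro x; exact le_max_left _ _
  · intro x
    have h1 : 0 ≤ Metric.infDist x (Icc s t) := Metric.infDist_nonneg
    have : 0 ≤ Metric.infDist x (Icc s t) / ε := div_nonneg h1 hε.le
    simp only [max_le_iff]
    constructor <;> linarith
  · intro x hx
    show max 0 (1 - Metric.infDist x (Icc s t) / ε) = 1
    rw [Metric.infDist_zero_of_mem hx]
    norm_num
  · intro x hx
    have hne : (Icc s t).Nonempty := nonempty_Icc.mpr hst
    have hd : ε ≤ Metric.infDist x (Icc s t) := by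
      by_contra hcon
      rw [not_le] at hcon
      obtain ⟨y, hy, hdy⟩ := (Metric.infDist_lt_iff hne).mp hcon
      rw [Real.dist_eq, abs_lt] at hdy
      simp only [mem_Icc, not_and, not_le] at hx
      rcases le_or_gt (s - ε) x with h | h
      · have h2 : t + ε < x := hx h
        have := hy.2; linarith [hdy.2]
      · have := hy.1; linarith [hdy.1]
    have h1le : 1 ≤ Metric.infDist x (Icc s t) / ε := (one_le_div hε).mpr hd
    have hle0 : 1 - Metric.infDist x (Icc s t) / ε ≤ 0 := by linarith
    show max 0 (1 - Metric.infDist x (Icc s t) / ε) = 0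
    exact max_eq_left hle0

/-- If `φ` vanishes outside `Icc a b` and `0 ≤ φ ≤ 1`, then `∫ φ dν ≤ ν (Icc a b)`. -/
lemma stmt16_integral_le (ν : Measure ℝ) [IsFiniteMeasure ν] {a b : ℝ} {φ : ℝ → ℝ}
    (hcont : Continuous φ) (hle1 : ∀ x, φ x ≤ 1)
    (hout : ∀ x ∉ Icc a b, φ x = 0) (hnn : ∀ x, 0 ≤ φ x) :
    ∫ x, φ x ∂ν ≤ (ν (Icc a b)).toReal := by
  have hφint : Integrable φ ν :=
    hcont.integrable_of_hasCompactSupport (HasCompactSupport.intro isCompact_Icc hout)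
  have hind : Integrable ((Icc a b).indicator fun _ => (1 : ℝ)) ν :=
    (integrable_const 1).indicator measurableSet_Icc
  have hmono : ∀ x, φ x ≤ (Icc a b).indicator (fun _ => (1 : ℝ)) x := by
    intro x
    by_cases hx : x ∈ Icc a b
    · rw [indicator_of_mem hx]; exact hle1 x
    · rw [indicator_of_notMem hx, hout x hx]
  calc ∫ x, φ x ∂ν ≤ ∫ x, (Icc a b).indicator (fun _ => (1 : ℝ)) x ∂ν :=
        integral_mono hφint hind hmono
    _ = (ν (Icc a b)).toReal := by
        rw [integral_indicator_const (1 : ℝ) measurableSet_Icc, smul_eq_mul, mul_one, measureReal_def]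

/-- If `φ = 1` on `Icc s t`, `φ ≥ 0` and `φ` vanishes outside a compact interval,
then `ν (Icc s t) ≤ ∫ φ dν`. -/
lemma stmt16_le_integral (ν : Measure ℝ) [IsFiniteMeasure ν] {a b s t : ℝ} {φ : ℝ → ℝ}
    (hcont : Continuous φ) (hnn : ∀ x, 0 ≤ φ x)
    (hout : ∀ x ∉ Icc a b, φ x = 0) (hone : ∀ x ∈ Icc s t, φ x = 1) :
    (ν (Icc s t)).toReal ≤ ∫ x, φ x ∂ν := by
  have hφint : Integrable φ ν :=
    hcont.integrable_of_hasCompactSupport (HasCompactSupport.intro isCompact_Icc hout)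
  have hind : Integrable ((Icc s t).indicator fun _ => (1 : ℝ)) ν :=
    (integrable_const 1).indicator measurableSet_Icc
  have hmono : ∀ x, (Icc s t).indicator (fun _ => (1 : ℝ)) x ≤ φ x := by
    intro x
    by_cases hx : x ∈ Icc s t
    · rw [indicator_of_mem hx, hone x hx]
    · rw [indicator_of_notMem hx]; exact hnn x
  calc (ν (Icc s t)).toReal
      = ∫ x, (Icc s t).indicator (fun _ => (1 : ℝ)) x ∂ν := by
        rw [integral_indicator_const (1 : ℝ) measurableSet_Icc, smul_eq_mul, mul_one, measureReal_def]
    _ ≤ ∫ x, φ x ∂ν := integral_mono hind hφint hmono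

/-- Clipping an interval to `[0,T]` for a measure supported on `[0,T]`. -/
lemma stmt16_clip (ν : Measure ℝ) (T : ℝ) (hsupp : ν (Icc (0:ℝ) T)ᶜ = 0) (a b : ℝ) :
    ν (Icc a b) ≤ ν (Icc (max 0 a) (min T b)) := by
  have h1 : Icc a b ⊆ Icc (max 0 a) (min T b) ∪ (Icc (0:ℝ) T)ᶜ := by
    intro x hx
    by_cases hx2 : x ∈ Icc (0:ℝ) T
    · exact Or.inl ⟨max_le hx2.1 hx.1, le_min hx2.2 hx.2⟩
    · exact Or.inr hx2
  calc ν (Icc a b) ≤ ν (Icc (max 0 a) (min T b) ∪ (Icc (0:ℝ) T)ᶜ) := measure_mono h1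
    _ ≤ ν (Icc (max 0 a) (min T b)) + ν (Icc (0:ℝ) T)ᶜ := measure_union_le _ _
    _ = ν (Icc (max 0 a) (min T b)) := by rw [hsupp, add_zero]
lemma stmt16_ind_int (T a b : ℝ) (ha : a ∈ Icc (0:ℝ) T) (hb : b ∈ Icc (0:ℝ) T)
    (hab : a ≤ b) (f : ℝ → ℝ) :
    ∫ r in Icc (0:ℝ) T, (Icc a b).indicator (fun _ => (1:ℝ)) r * f r = ∫ r in a..b, f r := by
  have h1 : (fun r => (Icc a b).indicator (fun _ => (1:ℝ)) r * f r) = (Icc a b).indicator f := by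
    ext r; by_cases hr : r ∈ Icc a b <;> simp [hr]
  rw [h1, MeasureTheory.integral_indicator measurableSet_Icc, Measure.restrict_restrict measurableSet_Icc,
    inter_eq_left.mpr (Icc_subset_Icc ha.1 hb.2), intervalIntegral.integral_of_le hab,
    ← integral_Icc_eq_integral_Ioc]

/-- Passage to the limit in the approximate energy identities: from
`μₙ([s,t]) = 𝓔ₙ(s) - 𝓔ₙ(t) + ∫ₛᵗ Pₙ` and the convergences `μₙ ⇀* μ`,
`𝓔ₙ → 𝓔` pointwise, `Pₙ ⇀* P`, one obtains
`μ([s,t]) + 𝓔₊(t) = 𝓔₋(s) + ∫ₛᵗ P`; in particular `μ({t}) = 𝓔₋(t) - 𝓔₊(t)`. -/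
theorem stmt16
    (T : ℝ) (hT : 0 < T)
    (μn : ℕ → Measure ℝ) (μ : Measure ℝ)
    [∀ n, IsFiniteMeasure (μn n)] [IsFiniteMeasure μ]
    (hμnsupp : ∀ n, μn n (Set.Icc (0:ℝ) T)ᶜ = 0) (hμsupp : μ (Set.Icc (0:ℝ) T)ᶜ = 0)
    -- weak-* convergence of the measures
    (hweak : ∀ φ : ℝ → ℝ, Continuous φ →
      Filter.Tendsto (fun n => ∫ x, φ x ∂(μn n)) Filter.atTop (nhds (∫ x, φ x ∂μ)))
    (𝓔n : ℕ → ℝ → ℝ) (𝓔 : ℝ → ℝ)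
    (hEbv : BoundedVariationOn 𝓔 (Set.Icc 0 T))
    (hEcv : ∀ t ∈ Set.Icc (0:ℝ) T,
      Filter.Tendsto (fun n => 𝓔n n t) Filter.atTop (nhds (𝓔 t)))
    (Pn : ℕ → ℝ → ℝ) (P : ℝ → ℝ)
    (hPbd : ∃ M, ∀ n, ∀ᵐ r ∂(volume.restrict (Set.Icc (0:ℝ) T)), |Pn n r| ≤ M)
    (hPint : MeasureTheory.IntegrableOn P (Set.Icc 0 T))
    -- weak-* convergence Pₙ ⇀* P in L∞(0,T)
    (hPweak : ∀ φ : ℝ → ℝ, MeasureTheory.IntegrableOn φ (Set.Icc 0 T) →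
      Filter.Tendsto (fun n => ∫ r in Set.Icc (0:ℝ) T, φ r * Pn n r) Filter.atTop
        (nhds (∫ r in Set.Icc (0:ℝ) T, φ r * P r)))
    -- one-sided limits of 𝓔, with the stated conventions at the endpoints
    (𝓔m 𝓔p : ℝ → ℝ)
    (h𝓔m : ∀ t ∈ Set.Ioc (0:ℝ) T,
      Filter.Tendsto 𝓔 (nhdsWithin t (Set.Ico 0 t)) (nhds (𝓔m t)))
    (h𝓔m0 : 𝓔m 0 = 𝓔 0)
    (h𝓔p : ∀ t ∈ Set.Ico (0:ℝ) T,
      Filter.Tendsto 𝓔 (nhdsWithin t (Set.Ioc t T)) (nhds (𝓔p t)))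
    (h𝓔pT : 𝓔p T = 𝓔 T)
    -- the approximate energy identities
    (hid : ∀ n, ∀ s ∈ Set.Icc (0:ℝ) T, ∀ t ∈ Set.Icc (0:ℝ) T, s ≤ t →
      ((μn n) (Set.Icc s t)).toReal
        = 𝓔n n s - 𝓔n n t + ∫ r in s..t, Pn n r) :
    (∀ s ∈ Set.Icc (0:ℝ) T, ∀ t ∈ Set.Icc (0:ℝ) T, s ≤ t →
      (μ (Set.Icc s t)).toReal + 𝓔p t = 𝓔m s + ∫ r in s..t, P r) ∧
    (∀ t ∈ Set.Icc (0:ℝ) T, (μ {t}).toReal = 𝓔m t - 𝓔p t) := by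
  -- interval integrability of P on subintervals of [0,T]
  have hPii : ∀ a ∈ Icc (0:ℝ) T, ∀ b ∈ Icc (0:ℝ) T, IntervalIntegrable P volume a b := by
    intro a ha b hb
    exact (hPint.mono_set (uIcc_subset_Icc ha hb)).intervalIntegrable
  -- convergence of interval masses
  have hconv : ∀ a, a ∈ Icc (0:ℝ) T → ∀ b, b ∈ Icc (0:ℝ) T → a ≤ b →
      Tendsto (fun n => ((μn n) (Icc a b)).toReal) atTop
        (𝓝 (𝓔 a - 𝓔 b + ∫ u in a..b, P u)) := by
    intro a ha b hb hab
    have hφint : IntegrableOn ((Icc a b).indicator fun _ => (1:ℝ)) (Icc 0 T) volume :=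
      (((integrableOn_const_iff (C := (1:ℝ))).mpr (Or.inr (by rw [Real.volume_Icc]; exact ENNReal.ofReal_lt_top)))).indicator
        measurableSet_Icc
    have hP := hPweak _ hφint
    rw [stmt16_ind_int T a b ha hb hab P] at hP
    have hP' : Tendsto (fun n => ∫ u in a..b, Pn n u) atTop (𝓝 (∫ u in a..b, P u)) :=
      hP.congr fun n => stmt16_ind_int T a b ha hb hab (Pn n)
    exact (((hEcv a ha).sub (hEcv b hb)).add hP').congr fun n => (hid n a ha b hb hab).symm
  -- the key identity
  have key : ∀ s ∈ Icc (0:ℝ) T, ∀ t ∈ Icc (0:ℝ) T, s ≤ t →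
      (μ (Icc s t)).toReal = 𝓔m s - 𝓔p t + ∫ u in s..t, P u := by
    intro s hs t ht hst
    set εk : ℕ → ℝ := fun k => 1/((k:ℝ)+1) with hεkdef
    have hεpos : ∀ k, 0 < εk k := fun k => by positivity
    have hεlim : Tendsto εk atTop (𝓝 0) := tendsto_one_div_add_atTop_nhds_zero_nat
    have hεanti : ∀ j k : ℕ, j ≤ k → εk k ≤ εk j := by
      intro j k h
      apply one_div_le_one_div_of_le (by positivity)
      have : (j:ℝ) ≤ k := Nat.cast_le.mpr h
      linarith
    set lo : ℕ → ℝ := fun k => max 0 (s - εk k) with hlodef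
    set hi : ℕ → ℝ := fun k => min T (t + εk k) with hhidef
    set lo2 : ℕ → ℝ := fun k => max 0 (s - 2*εk k) with hlo2def
    set hi2 : ℕ → ℝ := fun k => min T (t + 2*εk k) with hhi2def
    have hlo_mem : ∀ k, lo k ∈ Icc (0:ℝ) T :=
      fun k => ⟨le_max_left _ _, max_le hT.le (by linarith [hεpos k, hs.2])⟩
    have hhi_mem : ∀ k, hi k ∈ Icc (0:ℝ) T :=
      fun k => ⟨le_min hT.le (by linarith [ht.1, hεpos k]), min_le_left _ _⟩
    have hloS : ∀ k, lo k ≤ s := fun k => max_le hs.1 (by linarith [hεpos k])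
    have hhiT : ∀ k, t ≤ hi k := fun k => le_min ht.2 (by linarith [hεpos k])
    have hlr : ∀ k, lo k ≤ hi k := fun k => (hloS k).trans (hst.trans (hhiT k))
    set aseq : ℕ → ℝ := fun k => 𝓔 (lo k) - 𝓔 (hi k) + ∫ u in (lo k)..(hi k), P u with haseq
    have hak : ∀ k, Tendsto (fun n => ((μn n) (Icc (lo k) (hi k))).toReal) atTop (𝓝 (aseq k)) :=
      fun k => hconv _ (hlo_mem k) _ (hhi_mem k) (hlr k)
    -- limits of the endpoints
    have hε2lim : Tendsto (fun k => 2*εk k) atTop (𝓝 0) := by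
      have h := hεlim.const_mul (2:ℝ)
      rwa [mul_zero] at h
    have hlo_lim : Tendsto lo atTop (𝓝 s) := by
      have h1 : Tendsto (fun k => s - εk k) atTop (𝓝 s) := by
        simpa using tendsto_const_nhds.sub hεlim
      have h2 := (tendsto_const_nhds (x := (0:ℝ)) (f := atTop)).max h1
      rwa [max_eq_right hs.1] at h2
    have hhi_lim : Tendsto hi atTop (𝓝 t) := by
      have h1 : Tendsto (fun k => t + εk k) atTop (𝓝 t) := by
        simpa using tendsto_const_nhds.add hεlim
      have h2 := (tendsto_const_nhds (x := T) (f := atTop)).min h1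
      rwa [min_eq_right ht.2] at h2
    have hlo2_lim : Tendsto lo2 atTop (𝓝 s) := by
      have h1 : Tendsto (fun k => s - 2*εk k) atTop (𝓝 s) := by
        simpa using tendsto_const_nhds.sub hε2lim
      have h2 := (tendsto_const_nhds (x := (0:ℝ)) (f := atTop)).max h1
      rwa [max_eq_right hs.1] at h2
    have hhi2_lim : Tendsto hi2 atTop (𝓝 t) := by
      have h1 : Tendsto (fun k => t + 2*εk k) atTop (𝓝 t) := by
        simpa using tendsto_const_nhds.add hε2lim
      have h2 := (tendsto_const_nhds (x := T) (f := atTop)).min h1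
      rwa [min_eq_right ht.2] at h2
    -- limit of 𝓔 at the left endpoint
    have hEl : Tendsto (fun k => 𝓔 (lo k)) atTop (𝓝 (𝓔m s)) := by
      rcases eq_or_lt_of_le hs.1 with h0 | h0
      · have hconst : (fun k => 𝓔 (lo k)) = fun _ => 𝓔 0 := by
          funext k
          rw [show lo k = 0 from max_eq_left (by linarith [hεpos k])]
        rw [hconst, ← h0, h𝓔m0]
        exact tendsto_const_nhds
      · refine (h𝓔m s ⟨h0, hs.2⟩).comp ?_
        refine tendsto_nhdsWithin_of_tendsto_nhds_of_eventually_within _ hlo_lim ?_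
        exact Eventually.of_forall fun k => ⟨le_max_left _ _, max_lt h0 (by linarith [hεpos k])⟩
    -- limit of 𝓔 at the right endpoint
    have hEr : Tendsto (fun k => 𝓔 (hi k)) atTop (𝓝 (𝓔p t)) := by
      rcases eq_or_lt_of_le ht.2 with h0 | h0
      · have hconst : (fun k => 𝓔 (hi k)) = fun _ => 𝓔 T := by
          funext k
          rw [show hi k = T from min_eq_left (by linarith [hεpos k])]
        rw [hconst, h0, h𝓔pT]
        exact tendsto_const_nhds
      · refine (h𝓔p t ⟨ht.1, h0⟩).comp ?_
        refine tendsto_nhdsWithin_of_tendsto_nhds_of_eventually_within _ hhi_lim ?_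
        exact Eventually.of_forall fun k => ⟨lt_min h0 (by linarith [hεpos k]), min_le_left _ _⟩
    -- limit of the integral term
    have hFcont : ContinuousOn (fun x => ∫ u in (0:ℝ)..x, P u) (Icc 0 T) := by
      have h1 : IntegrableOn P (uIcc (0:ℝ) T) := by rwa [uIcc_of_le hT.le]
      have h2 := continuousOn_primitive_interval h1
      rwa [uIcc_of_le hT.le] at h2
    have hFsub : ∀ a ∈ Icc (0:ℝ) T, ∀ b ∈ Icc (0:ℝ) T,
        ∫ u in a..b, P u = (∫ u in (0:ℝ)..b, P u) - ∫ u in (0:ℝ)..a, P u := by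
      intro a ha b hb
      have h1 : IntervalIntegrable P volume 0 a := hPii 0 ⟨le_rfl, hT.le⟩ a ha
      have h2 : IntervalIntegrable P volume a b := hPii a ha b hb
      have := integral_add_adjacent_intervals h1 h2
      linarith
    have hF_at : ∀ (g : ℕ → ℝ) (x : ℝ), x ∈ Icc (0:ℝ) T → (∀ k, g k ∈ Icc (0:ℝ) T) →
        Tendsto g atTop (𝓝 x) →
        Tendsto (fun k => ∫ u in (0:ℝ)..(g k), P u) atTop (𝓝 (∫ u in (0:ℝ)..x, P u)) := by
      intro g x hx hg hgx
      exact (hFcont x hx).tendsto.comp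
        (tendsto_nhdsWithin_of_tendsto_nhds_of_eventually_within _ hgx (Eventually.of_forall hg))
    have hInt_lim : Tendsto (fun k => ∫ u in (lo k)..(hi k), P u) atTop
        (𝓝 (∫ u in s..t, P u)) := by
      have h1 := hF_at lo s hs hlo_mem hlo_lim
      have h2 := hF_at hi t ht hhi_mem hhi_lim
      have h3 : (fun k => ∫ u in (lo k)..(hi k), P u)
          = fun k => (∫ u in (0:ℝ)..(hi k), P u) - ∫ u in (0:ℝ)..(lo k), P u :=
        funext fun k => hFsub _ (hlo_mem k) _ (hhi_mem k)
      rw [h3, hFsub s hs t ht]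
      exact h2.sub h1
    have haA : Tendsto aseq atTop (𝓝 (𝓔m s - 𝓔p t + ∫ u in s..t, P u)) :=
      (hEl.sub hEr).add hInt_lim
    -- upper bound
    have hupper : ∀ k, (μ (Icc s t)).toReal ≤ aseq k := by
      intro k
      obtain ⟨φ, hc, hnn, hle1, hone, hout⟩ := stmt16_bump s t (εk k) hst (hεpos k)
      have h1 : (μ (Icc s t)).toReal ≤ ∫ x, φ x ∂μ := stmt16_le_integral μ hc hnn hout hone
      have h2 : ∀ n, ∫ x, φ x ∂(μn n) ≤ ((μn n) (Icc (lo k) (hi k))).toReal := by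
        intro n
        refine (stmt16_integral_le (μn n) hc hle1 hout hnn).trans
          (ENNReal.toReal_mono (measure_ne_top _ _) ?_)
        exact stmt16_clip (μn n) T (hμnsupp n) _ _
      exact h1.trans (le_of_tendsto_of_tendsto' (hweak φ hc) (hak k) h2)
    -- lower bound
    have hlower : ∀ k, aseq k ≤ (μ (Icc (lo2 k) (hi2 k))).toReal := by
      intro k
      obtain ⟨ψ, hc, hnn, hle1, hone, hout⟩ := stmt16_bump (lo k) (hi k) (εk k) (hlr k) (hεpos k)
      have h1 : ∀ n, ((μn n) (Icc (lo k) (hi k))).toReal ≤ ∫ x, ψ x ∂(μn n) :=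
        fun n => stmt16_le_integral (μn n) hc hnn hout hone
      have h2 : aseq k ≤ ∫ x, ψ x ∂μ := le_of_tendsto_of_tendsto' (hak k) (hweak ψ hc) h1
      have h3 : ∫ x, ψ x ∂μ ≤ (μ (Icc (lo k - εk k) (hi k + εk k))).toReal :=
        stmt16_integral_le μ hc hle1 hout hnn
      have h4 : μ (Icc (lo k - εk k) (hi k + εk k)) ≤ μ (Icc (lo2 k) (hi2 k)) := by
        refine (stmt16_clip μ T hμsupp _ _).trans (measure_mono (Icc_subset_Icc ?_ ?_))
        · exact max_le_max le_rfl (by linarith [le_max_right 0 (s - εk k)])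
        · exact min_le_min le_rfl (by linarith [min_le_right T (t + εk k)])
      exact h2.trans (h3.trans (ENNReal.toReal_mono (measure_ne_top _ _) h4))
    -- continuity from above
    have hanti : Antitone (fun k => Icc (lo2 k) (hi2 k)) := by
      intro j k hjk
      apply Icc_subset_Icc
      · exact max_le_max le_rfl (by linarith [hεanti j k hjk])
      · exact min_le_min le_rfl (by linarith [hεanti j k hjk])
    have hiInter : ⋂ k, Icc (lo2 k) (hi2 k) = Icc s t := by
      ext x
      simp only [mem_iInter, mem_Icc]
      constructor
      · intro h
        exact ⟨le_of_tendsto hlo2_lim (Eventually.of_forall fun k => (h k).1),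
          ge_of_tendsto hhi2_lim (Eventually.of_forall fun k => (h k).2)⟩
      · intro h k
        exact ⟨le_trans (max_le hs.1 (by linarith [hεpos k])) h.1,
          le_trans h.2 (le_min ht.2 (by linarith [hεpos k]))⟩
    have hμlim : Tendsto (fun k => (μ (Icc (lo2 k) (hi2 k))).toReal) atTop
        (𝓝 ((μ (Icc s t)).toReal)) := by
      have h1 := tendsto_measure_iInter_atTop (μ := μ)
        (fun k => measurableSet_Icc.nullMeasurableSet) hanti ⟨0, measure_ne_top μ _⟩
      rw [hiInter] at h1
      exact (ENNReal.tendsto_toReal (measure_ne_top μ _)).comp h1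
    have hA1 : (μ (Icc s t)).toReal ≤ 𝓔m s - 𝓔p t + ∫ u in s..t, P u :=
      ge_of_tendsto' haA hupper
    have hA2 : 𝓔m s - 𝓔p t + (∫ u in s..t, P u) ≤ (μ (Icc s t)).toReal :=
      le_of_tendsto_of_tendsto' haA hμlim hlower
    linarith
  constructor
  · intro s hs t ht hst
    have := key s hs t ht hst
    linarith
  · intro t ht
    have := key t ht t ht le_rfl
    rw [Icc_self, intervalIntegral.integral_same] at this
    linarith
end
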